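/- arXiv:1406.7158 — 3 statements merged into one kernel-verified Lean document; each statement's English description precedes it below -/
import Mathlib

section
/- The image of the closed standard fundamental domain 𝔉̄ under the Möbius transformation S : z ↦ −1/z is exactly the set {z ∈ ℍ : |z| ≤ 1, |z+1| ≥ 1, and |z−1| ≥ 1}. -/
open Complex

private lemma one_le_abs_iff' (x : ℂ) : 1 ≤ ‖x‖ ↔ 1 ≤ Complex.normSq x := by
  rw [← Complex.sq_norm]
  constructor <;> intro h <;> nlinarith [norm_nonneg x]

private lemma abs_le_one_iff' (x : ℂ) : ‖x‖ ≤ 1 ↔ Complex.normSq x ≤ 1 := by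
  rw [← Complex.sq_norm]
  constructor <;> intro h <;> nlinarith [norm_nonneg x]

/-- The closed standard fundamental domain of the action of `SL(2,ℤ)` on the upper
half-plane. -/
def FundDom : Set ℂ :=
  {z : ℂ | 0 < z.im ∧ 1 ≤ ‖z‖ ∧ |z.re| ≤ 1 / 2}

/-- The image of the closed standard fundamental domain under `S : z ↦ -1/z` is exactly
`{z ∈ ℍ : |z| ≤ 1, |z+1| ≥ 1, |z-1| ≥ 1}`. -/
theorem image_fundDom_S :
    (fun z : ℂ => -z⁻¹) '' FundDom =
      {z : ℂ | 0 < z.im ∧ ‖z‖ ≤ 1 ∧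
        1 ≤ ‖z + 1‖ ∧ 1 ≤ ‖z - 1‖} := by
  ext w
  simp only [Set.mem_image, Set.mem_setOf_eq, FundDom]
  constructor
  · rintro ⟨z, ⟨him, habs, hre⟩, rfl⟩
    have hz : z ≠ 0 := by
      intro h; rw [h] at him; simp at him
    have hns : 0 < Complex.normSq z := Complex.normSq_pos.2 hz
    rw [one_le_abs_iff'] at habs
    rw [abs_le] at hre
    have him' : (-z⁻¹).im = z.im / Complex.normSq z := by
      rw [Complex.neg_im, Complex.inv_im]; ring
    have e1 : -z⁻¹ + 1 = (z - 1) / z := by field_simp; ring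
    have e2 : -z⁻¹ + -1 = -((z + 1) / z) := by field_simp; ring
    refine ⟨by rw [him']; exact div_pos him hns, ?_, ?_, ?_⟩
    · rw [abs_le_one_iff']
      simp only [Complex.normSq_neg, Complex.normSq_inv]
      rw [inv_le_one_iff₀]; right; exact habs
    · rw [one_le_abs_iff', e1, Complex.normSq_div]
      rw [le_div_iff₀ hns]
      have : Complex.normSq (z - 1) = Complex.normSq z - 2 * z.re + 1 := by
        simp [Complex.normSq_apply]; ring
      rw [this]; linarith [hre.2]
    · rw [show -z⁻¹ - 1 = -z⁻¹ + -1 by ring, one_le_abs_iff', e2, Complex.normSq_neg,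
        Complex.normSq_div]
      rw [le_div_iff₀ hns]
      have : Complex.normSq (z + 1) = Complex.normSq z + 2 * z.re + 1 := by
        simp [Complex.normSq_apply]; ring
      rw [this]; linarith [hre.1]
  · rintro ⟨him, habs, hp, hm⟩
    have hw : w ≠ 0 := by
      intro h; rw [h] at him; simp at him
    have hns : 0 < Complex.normSq w := Complex.normSq_pos.2 hw
    rw [abs_le_one_iff'] at habs
    rw [one_le_abs_iff'] at hp hm
    have hnp : Complex.normSq (w + 1) = Complex.normSq w + 2 * w.re + 1 := by
      simp [Complex.normSq_apply]; ring
    have hnm : Complex.normSq (w - 1) = Complex.normSq w - 2 * w.re + 1 := by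
      simp [Complex.normSq_apply]; ring
    refine ⟨-w⁻¹, ⟨?_, ?_, ?_⟩, ?_⟩
    · have : (-w⁻¹).im = w.im / Complex.normSq w := by
        rw [Complex.neg_im, Complex.inv_im]; ring
      rw [this]; exact div_pos him hns
    · rw [one_le_abs_iff']
      simp only [Complex.normSq_neg, Complex.normSq_inv]
      rw [le_inv_comm₀ one_pos hns]
      simpa using habs
    · have : (-w⁻¹).re = -w.re / Complex.normSq w := by
        rw [Complex.neg_re, Complex.inv_re]; ring
      rw [this, abs_le]
      constructor
      · rw [le_div_iff₀ hns]; rw [hnp] at hp; linarith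
      · rw [div_le_iff₀ hns]; rw [hnm] at hm; linarith
    · show -(-w⁻¹)⁻¹ = w
      rw [inv_neg, inv_inv, neg_neg]
end

section
/- The image of the closed standard fundamental domain 𝔉̄ under the Möbius transformation ST⁻¹ : z ↦ −1/(z−1) is exactly the set {z ∈ ℍ : Re z ≤ 1/2, |z − 1/3| ≥ 1/3, and |z−1| ≤ 1}. -/
open Complex

private lemma le_abs_iff_sq {r : ℝ} (hr : 0 ≤ r) {z : ℂ} :
    r ≤ ‖z‖ ↔ r ^ 2 ≤ Complex.normSq z := by
  rw [← Complex.sq_norm]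
  exact ⟨fun h => pow_le_pow_left₀ hr h 2,
    fun h => le_of_pow_le_pow_left₀ two_ne_zero (norm_nonneg z) h⟩

private lemma abs_le_iff_sq {r : ℝ} (hr : 0 ≤ r) {z : ℂ} :
    ‖z‖ ≤ r ↔ Complex.normSq z ≤ r ^ 2 := by
  rw [← Complex.sq_norm]
  exact ⟨fun h => pow_le_pow_left₀ (norm_nonneg z) h 2,
    fun h => le_of_pow_le_pow_left₀ two_ne_zero hr h⟩

private lemma abs_le_abs_iff_sq {z w : ℂ} :
    ‖z‖ ≤ ‖w‖ ↔ Complex.normSq z ≤ Complex.normSq w := by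
  rw [← Complex.sq_norm, ← Complex.sq_norm]
  exact ⟨fun h => pow_le_pow_left₀ (norm_nonneg z) h 2,
    fun h => le_of_pow_le_pow_left₀ two_ne_zero (norm_nonneg w) h⟩

/-- The image of the closed standard fundamental domain under `ST⁻¹ : z ↦ -1/(z-1)` is
exactly `{z ∈ ℍ : Re z ≤ 1/2, |z - 1/3| ≥ 1/3, |z-1| ≤ 1}`. -/
theorem image_fundDom_ST_inv :
    (fun z : ℂ => -(z - 1)⁻¹) '' FundDom =
      {z : ℂ | 0 < z.im ∧ z.re ≤ 1 / 2 ∧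
        1 / 3 ≤ ‖z - 1 / 3‖ ∧ ‖z - 1‖ ≤ 1} := by
  have h13 : (1/3 : ℂ) = Complex.ofReal (1/3) := by norm_num
  ext w
  simp only [Set.mem_image, Set.mem_setOf_eq, FundDom]
  constructor
  · rintro ⟨z, ⟨him, habs, hre⟩, rfl⟩
    obtain ⟨hre1, hre2⟩ := abs_le.mp hre
    have hz1 : z - 1 ≠ 0 := fun h => by
      have : z.im = 0 := by
        have := congrArg Complex.im h; simpa using this
      linarith
    have hd : 0 < Complex.normSq (z - 1) := Complex.normSq_pos.mpr hz1
    have habs' : 1 ≤ Complex.normSq z := by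
      have := (le_abs_iff_sq (by norm_num : (0:ℝ) ≤ 1)).mp habs; linarith [this]
    rw [Complex.normSq_apply] at habs'
    refine ⟨?_, ?_, ?_, ?_⟩
    · have e : (-(z-1)⁻¹).im = z.im / Complex.normSq (z - 1) := by
        simp [Complex.inv_im, Complex.sub_im]; ring
      rw [e]; positivity
    · have e : (-(z-1)⁻¹).re = (1 - z.re) / Complex.normSq (z - 1) := by
        simp [Complex.inv_re, Complex.sub_re]; ring
      rw [e, div_le_iff₀ hd, Complex.normSq_apply, Complex.sub_re, Complex.sub_im]
      simp only [Complex.one_re, Complex.one_im]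
      nlinarith
    · have e : -(z-1)⁻¹ - 1/3 = -(z + 2) / (3 * (z - 1)) := by
        field_simp; ring
      rw [e, norm_div, norm_neg, norm_mul]
      have h3 : ‖(3:ℂ)‖ = 3 := by
        simp
      rw [h3, le_div_iff₀ (mul_pos (by norm_num) (norm_pos_iff.mpr hz1))]
      have : 1 / 3 * (3 * ‖z - 1‖) = ‖z - 1‖ := by ring
      rw [this, abs_le_abs_iff_sq, Complex.normSq_apply, Complex.normSq_apply,
        Complex.sub_re, Complex.sub_im, Complex.add_re, Complex.add_im]
      simp only [Complex.one_re, Complex.one_im]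
      norm_num
      nlinarith
    · have e : -(z-1)⁻¹ - 1 = -z / (z - 1) := by
        field_simp; ring
      rw [e, norm_div, norm_neg, div_le_one (norm_pos_iff.mpr hz1),
        abs_le_abs_iff_sq, Complex.normSq_apply, Complex.normSq_apply,
        Complex.sub_re, Complex.sub_im]
      simp only [Complex.one_re, Complex.one_im]
      nlinarith
  · rintro ⟨him, hre, hc3, hc1⟩
    have hw0 : w ≠ 0 := fun h => by simp [h] at him
    have he : 0 < Complex.normSq w := Complex.normSq_pos.mpr hw0
    have he' : Complex.normSq w = w.re * w.re + w.im * w.im := Complex.normSq_apply w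
    have hc1' : (w.re - 1) * (w.re - 1) + w.im * w.im ≤ 1 := by
      have := (abs_le_iff_sq (by norm_num : (0:ℝ) ≤ 1)).mp hc1
      rw [Complex.normSq_apply, Complex.sub_re, Complex.sub_im] at this
      simp only [Complex.one_re, Complex.one_im] at this
      nlinarith [this]
    have hc3' : (1:ℝ)/9 ≤ (w.re - 1/3) * (w.re - 1/3) + w.im * w.im := by
      rw [h13] at hc3
      have := (le_abs_iff_sq (by norm_num : (0:ℝ) ≤ 1/3)).mp hc3
      rw [Complex.normSq_apply, Complex.sub_re, Complex.sub_im] at this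
      simp only [Complex.ofReal_re, Complex.ofReal_im] at this
      nlinarith [this]
    refine ⟨1 - w⁻¹, ⟨?_, ?_, ?_⟩, ?_⟩
    · have e : (1 - w⁻¹ : ℂ).im = w.im / Complex.normSq w := by
        simp [Complex.inv_im, Complex.sub_im]; ring
      rw [e]; positivity
    · have e : (1 - w⁻¹ : ℂ) = (w - 1) / w := by field_simp
      rw [e, norm_div, le_div_iff₀ (norm_pos_iff.mpr hw0), one_mul, abs_le_abs_iff_sq,
        Complex.normSq_apply, Complex.normSq_apply, Complex.sub_re, Complex.sub_im]
      simp only [Complex.one_re, Complex.one_im]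
      nlinarith
    · have e : (1 - w⁻¹ : ℂ).re = 1 - w.re / Complex.normSq w := by
        simp [Complex.inv_re, Complex.sub_re]
      rw [e, abs_le]
      constructor
      · rw [neg_le, neg_sub, sub_le_iff_le_add, div_le_iff₀ he]
        nlinarith
      · rw [sub_le_iff_le_add, ← sub_le_iff_le_add', le_div_iff₀ he]
        nlinarith
    · show -(1 - w⁻¹ - 1)⁻¹ = w
      field_simp
      ring
end

section
/- The union of 𝔉̄ with its images under the Möbius transformations S : z ↦ −1/z, ST : z ↦ −1/(z+1), and ST⁻¹ : z ↦ −1/(z−1) contains the strip {z ∈ ℍ : |Re z| ≤ 1/2 and Im z ≥ 1/3}. -/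
open Complex

set_option maxHeartbeats 800000 in
/-- The union of the closed standard fundamental domain with its images under
`S : z ↦ -1/z`, `ST : z ↦ -1/(z+1)` and `ST⁻¹ : z ↦ -1/(z-1)` contains the strip
`{z ∈ ℍ : |Re z| ≤ 1/2, Im z ≥ 1/3}`. -/
theorem strip_subset_union_fundDom_images :
    {z : ℂ | 0 < z.im ∧ |z.re| ≤ 1 / 2 ∧ 1 / 3 ≤ z.im} ⊆
      FundDom ∪ (fun z : ℂ => -z⁻¹) '' FundDom ∪
        (fun z : ℂ => -(z + 1)⁻¹) '' FundDom ∪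
        (fun z : ℂ => -(z - 1)⁻¹) '' FundDom := by
  rintro z ⟨him, hre, him3⟩
  have hz : z ≠ 0 := by
    intro h; rw [h] at him; simp at him
  have hn : 0 < Complex.normSq z := Complex.normSq_pos.mpr hz
  by_cases h1 : 1 ≤ ‖z‖
  · exact Or.inl (Or.inl (Or.inl ⟨him, h1, hre⟩))
  push_neg at h1
  set n := Complex.normSq z with hn_def
  have hns : n < 1 := by
    have h := Complex.sq_norm z
    nlinarith [norm_nonneg z]
  have hnx : n = z.re ^ 2 + z.im ^ 2 := by
    rw [hn_def, Complex.normSq_apply]; ring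
  have hxlow : -(1/2) ≤ z.re := (abs_le.mp hre).1
  have hxhigh : z.re ≤ 1/2 := (abs_le.mp hre).2
  have hxabs : |z.re| ≤ (3/2) * n := by
    nlinarith [sq_nonneg (|z.re| - 1/3), _root_.sq_abs z.re, abs_nonneg z.re]
  have hure : (-z⁻¹).re = -z.re / n := by
    simp [Complex.inv_re, neg_div, hn_def]
  have huim : (-z⁻¹).im = z.im / n := by
    simp [Complex.inv_im, neg_div, hn_def]
  have huim_pos : 0 < (-z⁻¹).im := by rw [huim]; positivity
  have habs_u : 1 ≤ ‖-z⁻¹‖ := by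
    rw [norm_neg, norm_inv]
    rw [le_inv_comm₀ one_pos (norm_pos_iff.mpr hz)]
    simpa using h1.le
  have hinv : -(-z⁻¹)⁻¹ = z := by rw [inv_neg, inv_inv, neg_neg]
  rcases le_or_gt |(-z⁻¹).re| (1/2) with h2 | h2
  · exact Or.inl (Or.inl (Or.inr ⟨-z⁻¹, ⟨huim_pos, habs_u, h2⟩, hinv⟩))
  rcases le_or_gt 0 ((-z⁻¹).re) with h3 | h3
  · -- u.re > 1/2 ; use w = -z⁻¹ - 1, ST image
    have hgt : 1/2 < (-z⁻¹).re := by rwa [_root_.abs_of_nonneg h3] at h2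
    have hle : (-z⁻¹).re ≤ 3/2 := by
      rw [hure, div_le_iff₀ hn]
      have h4 : -z.re ≤ |z.re| := neg_le_abs z.re
      linarith
    refine Or.inl (Or.inr ⟨-z⁻¹ - 1, ⟨?_, ?_, ?_⟩, ?_⟩)
    · simpa using huim_pos
    · have he : Complex.normSq (-z⁻¹ - 1) =
          ((-z⁻¹).re - 1)^2 + ((-z⁻¹).im)^2 := by
        rw [Complex.normSq_apply, Complex.sub_re, Complex.sub_im,
          Complex.one_re, Complex.one_im]
        ring
      have hns2 : (1:ℝ) ≤ Complex.normSq (-z⁻¹ - 1) := by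
        rw [he, hure, huim]
        have h5 : (-z.re / n - 1)^2 + (z.im/n)^2 =
            (n^2 + 2*z.re*n + (z.re^2 + z.im^2))/n^2 := by
          field_simp; ring
        rw [h5, le_div_iff₀ (by positivity)]
        nlinarith
      nlinarith [Complex.sq_norm (-z⁻¹ - 1), norm_nonneg (-z⁻¹ - 1)]
    · have h6 : (-z⁻¹ - 1).re = (-z⁻¹).re - 1 := by simp
      rw [h6, abs_le]; constructor <;> linarith
    · show -(-z⁻¹ - 1 + 1)⁻¹ = z
      rw [sub_add_cancel, hinv]
  · -- u.re < -1/2 ; use w = -z⁻¹ + 1, ST⁻¹ image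
    have hlt : (-z⁻¹).re < -(1/2) := by
      rw [abs_of_neg h3] at h2; linarith
    have hge : -(3/2) ≤ (-z⁻¹).re := by
      rw [hure, neg_div, neg_le_neg_iff, div_le_iff₀ hn]
      have h4 : z.re ≤ |z.re| := le_abs_self z.re
      linarith
    refine Or.inr ⟨-z⁻¹ + 1, ⟨?_, ?_, ?_⟩, ?_⟩
    · simpa using huim_pos
    · have he : Complex.normSq (-z⁻¹ + 1) =
          ((-z⁻¹).re + 1)^2 + ((-z⁻¹).im)^2 := by
        rw [Complex.normSq_apply, Complex.add_re, Complex.add_im,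
          Complex.one_re, Complex.one_im]
        ring
      have hns2 : (1:ℝ) ≤ Complex.normSq (-z⁻¹ + 1) := by
        rw [he, hure, huim]
        have h5 : (-z.re / n + 1)^2 + (z.im/n)^2 =
            (n^2 - 2*z.re*n + (z.re^2 + z.im^2))/n^2 := by
          field_simp; ring
        rw [h5, le_div_iff₀ (by positivity)]
        nlinarith
      nlinarith [Complex.sq_norm (-z⁻¹ + 1), norm_nonneg (-z⁻¹ + 1)]
    · have h6 : (-z⁻¹ + 1).re = (-z⁻¹).re + 1 := by simp
      rw [h6, abs_le]; constructor <;> linarith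
    · show -(-z⁻¹ + 1 - 1)⁻¹ = z
      rw [add_sub_cancel_right, hinv]
end
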